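/- Let μ be a nonnegative measure on (0,∞) whose support contains at least two distinct points, and let S ⊆ ℝ be an open interval such that ∫_{(0,∞)} u²·e^{s·u} dμ(u) < ∞ for all s ∈ S and ∫_{(0,∞)} u·e^{s·u} dμ(u) > 0 for all s ∈ S. Then the function s ↦ (∫_{(0,∞)} u²·e^{s·u} dμ(u)) / (∫_{(0,∞)} u·e^{s·u} dμ(u)) is strictly increasing on S. If instead μ is a positive multiple of a point mass at u₀ > 0, this ratio is constant and equal to u₀. -/

import Mathlib

open MeasureTheory Set

lemma kern_nonneg {s t u v : ℝ} (hst : s ≤ t) (hu : 0 < u) (hv : 0 < v) :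
    0 ≤ u * v * (u - v) * (Real.exp (t*u) * Real.exp (s*v) - Real.exp (s*u) * Real.exp (t*v)) := by
  rcases le_total v u with h | h
  · have he : Real.exp (s*u) * Real.exp (t*v) ≤ Real.exp (t*u) * Real.exp (s*v) := by
      rw [← Real.exp_add, ← Real.exp_add]; apply Real.exp_le_exp.2; nlinarith
    have h3 : 0 ≤ (u - v) * (Real.exp (t*u) * Real.exp (s*v) - Real.exp (s*u) * Real.exp (t*v)) :=
      mul_nonneg (by linarith) (by linarith)
    nlinarith [mul_nonneg (mul_pos hu hv).le h3]
  · have he : Real.exp (t*u) * Real.exp (s*v) ≤ Real.exp (s*u) * Real.exp (t*v) := by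
      rw [← Real.exp_add, ← Real.exp_add]; apply Real.exp_le_exp.2; nlinarith
    have h3 : 0 ≤ (u - v) * (Real.exp (t*u) * Real.exp (s*v) - Real.exp (s*u) * Real.exp (t*v)) :=
      mul_nonneg_of_nonpos_of_nonpos (by linarith) (by linarith)
    nlinarith [mul_nonneg (mul_pos hu hv).le h3]

lemma comb_integral {ν : Measure ℝ} {F G f g : ℝ → ℝ}
    (hF : Integrable F ν) (hG : Integrable G ν) (hf : Integrable f ν) (hg : Integrable g ν)
    (a b c d : ℝ) :
    ∫ v, (a * G v - b * F v + c * f v - d * g v) ∂ν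
      = a * ∫ v, G v ∂ν - b * ∫ v, F v ∂ν + c * ∫ v, f v ∂ν - d * ∫ v, g v ∂ν := by
  have h1 : Integrable (fun v => a * G v - b * F v) ν := (hG.const_mul _).sub (hF.const_mul _)
  have h2 : Integrable (fun v => a * G v - b * F v + c * f v) ν := h1.add (hf.const_mul _)
  rw [show (fun v => a * G v - b * F v + c * f v - d * g v)
      = fun v => (a * G v - b * F v + c * f v) - d * g v from rfl]
  rw [integral_sub h2 (hg.const_mul _), integral_add h1 (hf.const_mul _),
    integral_sub (hG.const_mul _) (hF.const_mul _),
    integral_const_mul, integral_const_mul, integral_const_mul, integral_const_mul]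

lemma comb_integrable {ν : Measure ℝ} {F G f g : ℝ → ℝ}
    (hF : Integrable F ν) (hG : Integrable G ν) (hf : Integrable f ν) (hg : Integrable g ν)
    (a b c d : ℝ) :
    Integrable (fun v => a * G v - b * F v + c * f v - d * g v) ν := by
  have h1 : Integrable (fun v => a * G v - b * F v) ν := (hG.const_mul _).sub (hF.const_mul _)
  have h2 : Integrable (fun v => a * G v - b * F v + c * f v) ν := h1.add (hf.const_mul _)
  exact h2.sub (hg.const_mul _)

lemma kern_lower {s t : ℝ} (hst : s < t) (u v au bu av bv d : ℝ)
    (hau : 0 < au) (hav : 0 < av)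
    (h1 : au ≤ u) (h2 : u ≤ bu) (h3 : av ≤ v) (h4 : v ≤ bv) (hd : 0 < d) (hvd : v + d ≤ u) :
    au * av * d * (Real.exp (-(|s| * (bu + bv))) * (Real.exp ((t-s)*d) - 1))
      ≤ u * v * (u - v) * (Real.exp (t*u) * Real.exp (s*v) - Real.exp (s*u) * Real.exp (t*v)) := by
  have hv0 : 0 < v := lt_of_lt_of_le hav h3
  have hu0 : 0 < u := lt_of_lt_of_le hau h1
  have hts : 0 < t - s := by linarith
  have e1 : Real.exp (t*u) * Real.exp (s*v) - Real.exp (s*u) * Real.exp (t*v)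
      = Real.exp (s*u) * Real.exp (s*v) * (Real.exp ((t-s)*u) - Real.exp ((t-s)*v)) := by
    rw [show t*u = s*u + (t-s)*u by ring, show t*v = s*v + (t-s)*v by ring,
      Real.exp_add, Real.exp_add]
    ring
  have e2 : Real.exp (-(|s| * (bu + bv))) ≤ Real.exp (s*u) * Real.exp (s*v) := by
    rw [← Real.exp_add]; apply Real.exp_le_exp.2
    have h5 : -|s| ≤ s := neg_abs_le s
    nlinarith [abs_nonneg s]
  have hrd1 : 1 ≤ Real.exp ((t-s)*d) := Real.one_le_exp (by positivity)
  have e3 : Real.exp ((t-s)*d) - 1 ≤ Real.exp ((t-s)*u) - Real.exp ((t-s)*v) := by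
    have h6 : Real.exp ((t-s)*v) * Real.exp ((t-s)*d) ≤ Real.exp ((t-s)*u) := by
      rw [← Real.exp_add]; apply Real.exp_le_exp.2; nlinarith
    have h7 : 1 ≤ Real.exp ((t-s)*v) := Real.one_le_exp (by positivity)
    nlinarith
  have p1 : au * av * d ≤ u * v * (u - v) := by
    have s1 : au * av ≤ u * v := mul_le_mul h1 h3 hav.le (by linarith)
    exact mul_le_mul s1 (by linarith) hd.le (by positivity)
  have q2 : Real.exp (-(|s| * (bu + bv))) * (Real.exp ((t-s)*d) - 1)
      ≤ Real.exp (s*u) * Real.exp (s*v) * (Real.exp ((t-s)*u) - Real.exp ((t-s)*v)) :=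
    mul_le_mul e2 e3 (by linarith) (by positivity)
  rw [e1]
  exact mul_le_mul p1 q2 (mul_nonneg (Real.exp_pos _).le (by linarith)) (mul_pos (mul_pos hu0 hv0) (show (0:ℝ) < u - v by linarith)).le

lemma stmt5_aux (μ : Measure ℝ) (s t : ℝ) (hst : s < t)
    (u₁ u₂ : ℝ) (h1 : 0 < u₁) (h2 : 0 < u₂) (h21 : u₂ < u₁)
    (hs1 : ∀ ε > (0:ℝ), μ (Metric.ball u₁ ε ∩ Set.Ioi 0) ≠ 0)
    (hs2 : ∀ ε > (0:ℝ), μ (Metric.ball u₂ ε ∩ Set.Ioi 0) ≠ 0)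
    (hF : IntegrableOn (fun u => u^2 * Real.exp (s*u)) (Set.Ioi 0) μ)
    (hG : IntegrableOn (fun u => u^2 * Real.exp (t*u)) (Set.Ioi 0) μ)
    (hf : IntegrableOn (fun u => u * Real.exp (s*u)) (Set.Ioi 0) μ)
    (hg : IntegrableOn (fun u => u * Real.exp (t*u)) (Set.Ioi 0) μ) :
    (∫ u in Set.Ioi (0:ℝ), u^2 * Real.exp (s*u) ∂μ) * (∫ u in Set.Ioi (0:ℝ), u * Real.exp (t*u) ∂μ)
      < (∫ u in Set.Ioi (0:ℝ), u^2 * Real.exp (t*u) ∂μ) *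
        (∫ u in Set.Ioi (0:ℝ), u * Real.exp (s*u) ∂μ) := by
  set ν := μ.restrict (Set.Ioi 0) with hν
  set F : ℝ → ℝ := fun u => u^2 * Real.exp (s*u) with hFdef
  set G : ℝ → ℝ := fun u => u^2 * Real.exp (t*u) with hGdef
  set f : ℝ → ℝ := fun u => u * Real.exp (s*u) with hfdef
  set g : ℝ → ℝ := fun u => u * Real.exp (t*u) with hgdef
  set IF := ∫ u, F u ∂ν with hIF
  set IG := ∫ u, G u ∂ν with hIG
  set If := ∫ u, f u ∂ν with hIf
  set Ig := ∫ u, g u ∂ν with hIg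
  set I : ℝ → ℝ := fun u => If * G u - Ig * F u + IG * f u - IF * g u with hI
  set K : ℝ → ℝ → ℝ := fun u v => f u * G v - g u * F v + G u * f v - F u * g v with hK
  have hKint : ∀ u : ℝ, Integrable (fun v => K u v) ν :=
    fun u => comb_integrable hF hG hf hg _ _ _ _
  have hKI : ∀ u : ℝ, ∫ v, K u v ∂ν = I u := by
    intro u
    simp only [hK]
    rw [comb_integral hF hG hf hg (f u) (g u) (G u) (F u)]
    simp only [hI, ← hIF, ← hIG, ← hIf, ← hIg]; ring
  have hIint : Integrable I ν := comb_integrable hF hG hf hg _ _ _ _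
  have hIsum : ∫ u, I u ∂ν = 2 * (IG * If - IF * Ig) := by
    simp only [hI]
    rw [comb_integral hF hG hf hg If Ig IG IF]
    ring
  have hKid : ∀ u v : ℝ, K u v
      = u * v * (u - v) * (Real.exp (t*u) * Real.exp (s*v) - Real.exp (s*u) * Real.exp (t*v)) := by
    intro u v; simp only [hK, hFdef, hGdef, hfdef, hgdef]; ring
  have hKnn : ∀ u ∈ Set.Ioi (0:ℝ), ∀ v ∈ Set.Ioi (0:ℝ), 0 ≤ K u v := by
    intro u hu v hv; rw [hKid]; exact kern_nonneg hst.le hu hv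
  have hInn : ∀ u ∈ Set.Ioi (0:ℝ), 0 ≤ I u := by
    intro u hu
    rw [← hKI u]
    apply integral_nonneg_of_ae
    filter_upwards [ae_restrict_mem measurableSet_Ioi] with v hv
    exact hKnn u hu v hv
  -- the geometric setup
  set ε := min u₂ (u₁ - u₂) / 4 with hε
  have hε0 : 0 < ε := by
    have := lt_min h2 (by linarith : (0:ℝ) < u₁ - u₂); positivity
  have hεu2 : ε ≤ u₂ / 4 := by
    have := min_le_left u₂ (u₁ - u₂); rw [hε]; linarith
  have hεd : ε ≤ (u₁ - u₂) / 4 := by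
    have := min_le_right u₂ (u₁ - u₂); rw [hε]; linarith
  set d := (u₁ - u₂) / 2 with hd
  have hd0 : 0 < d := by rw [hd]; linarith
  set A := Metric.ball u₁ ε ∩ Set.Ioi (0:ℝ) with hA
  set B := Metric.ball u₂ ε ∩ Set.Ioi (0:ℝ) with hB
  have hAmeas : MeasurableSet A := measurableSet_ball.inter measurableSet_Ioi
  have hBmeas : MeasurableSet B := measurableSet_ball.inter measurableSet_Ioi
  have hmemA : ∀ u ∈ A, u₁ - ε ≤ u ∧ u ≤ u₁ + ε ∧ u ∈ Set.Ioi (0:ℝ) := by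
    intro u hu
    obtain ⟨hub, hui⟩ := hu
    rw [Metric.mem_ball, Real.dist_eq, abs_lt] at hub
    exact ⟨by linarith [hub.1], by linarith [hub.2], hui⟩
  have hmemB : ∀ v ∈ B, u₂ - ε ≤ v ∧ v ≤ u₂ + ε ∧ v ∈ Set.Ioi (0:ℝ) := by
    intro v hv
    obtain ⟨hvb, hvi⟩ := hv
    rw [Metric.mem_ball, Real.dist_eq, abs_lt] at hvb
    exact ⟨by linarith [hvb.1], by linarith [hvb.2], hvi⟩
  have hau : 0 < u₁ - ε := by linarith
  have hav : 0 < u₂ - ε := by linarith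
  set δ := (u₁ - ε) * (u₂ - ε) * d *
      (Real.exp (-(|s| * ((u₁ + ε) + (u₂ + ε)))) * (Real.exp ((t-s)*d) - 1)) with hδ
  have hδpos : 0 < δ := by
    have he1 : 1 < Real.exp ((t-s)*d) := by
      rw [show (1:ℝ) = Real.exp 0 from (Real.exp_zero).symm]
      exact Real.exp_lt_exp.2 (by nlinarith)
    rw [hδ]
    exact mul_pos (mul_pos (mul_pos hau hav) hd0)
      (mul_pos (Real.exp_pos _) (by linarith))
  have hKlb : ∀ u ∈ A, ∀ v ∈ B, δ ≤ K u v := by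
    intro u hu v hv
    obtain ⟨ha1, ha2, ha3⟩ := hmemA u hu
    obtain ⟨hb1, hb2, hb3⟩ := hmemB v hv
    rw [hKid, hδ]
    exact kern_lower hst u v (u₁ - ε) (u₁ + ε) (u₂ - ε) (u₂ + ε) d hau hav ha1 ha2 hb1 hb2 hd0
      (by rw [hd]; linarith)
  -- finiteness of ν A, ν B
  have hfin : ∀ (w : ℝ), 0 < w - ε → ν (Metric.ball w ε ∩ Set.Ioi 0) < ⊤ := by
    intro w hw
    have hm : (0:ℝ) < (w - ε)^2 * Real.exp (-(|s| * (w + ε))) := by positivity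
    refine lt_of_le_of_lt (measure_mono ?_) (hF.measure_ge_lt_top hm)
    intro u hu
    obtain ⟨hub, hui⟩ := hu
    rw [Metric.mem_ball, Real.dist_eq, abs_lt] at hub
    have hu1 : w - ε ≤ u := by linarith [hub.1]
    have hu2 : u ≤ w + ε := by linarith [hub.2]
    have hu0 : (0:ℝ) < u := hui
    simp only [Set.mem_setOf_eq, hFdef]
    have e2 : Real.exp (-(|s| * (w + ε))) ≤ Real.exp (s * u) := by
      apply Real.exp_le_exp.2
      have h5 : -|s| ≤ s := neg_abs_le s
      nlinarith [abs_nonneg s]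
    have e3 : (w - ε)^2 ≤ u^2 := by nlinarith
    exact mul_le_mul e3 e2 (Real.exp_pos _).le (by positivity)
  have hAfin : ν A < ⊤ := hfin u₁ hau
  have hBfin : ν B < ⊤ := hfin u₂ hav
  have hrestr : ∀ (w : ℝ), ν (Metric.ball w ε ∩ Set.Ioi 0) = μ (Metric.ball w ε ∩ Set.Ioi 0) := by
    intro w
    rw [hν, Measure.restrict_apply (measurableSet_ball.inter measurableSet_Ioi),
      Set.inter_assoc, Set.inter_self]
  have hAne : ν A ≠ 0 := by rw [hA, hrestr]; exact hs1 ε hε0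
  have hBne : ν B ≠ 0 := by rw [hB, hrestr]; exact hs2 ε hε0
  have hBtr : 0 < (ν B).toReal := ENNReal.toReal_pos hBne hBfin.ne
  have hAtr : 0 < (ν A).toReal := ENNReal.toReal_pos hAne hAfin.ne
  -- lower bound on I over A
  have hIlb : ∀ u ∈ A, δ * (ν B).toReal ≤ I u := by
    intro u hu
    have hu0 : u ∈ Set.Ioi (0:ℝ) := (hmemA u hu).2.2
    calc δ * (ν B).toReal ≤ ∫ v in B, K u v ∂ν :=
          (le_of_eq (by rw [smul_eq_mul, measureReal_def]; ring)).trans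
          (setIntegral_ge_of_const_le hBmeas hBfin.ne (fun v hv => hKlb u hu v hv)
            (hKint u).integrableOn)
      _ ≤ ∫ v, K u v ∂ν := by
          apply setIntegral_le_integral (hKint u)
          filter_upwards [ae_restrict_mem measurableSet_Ioi] with v hv
          exact hKnn u hu0 v hv
      _ = I u := hKI u
  have hmain : δ * (ν B).toReal * (ν A).toReal ≤ ∫ u, I u ∂ν := by
    calc δ * (ν B).toReal * (ν A).toReal ≤ ∫ u in A, I u ∂ν :=
          (le_of_eq (by rw [smul_eq_mul, measureReal_def]; ring)).trans
          (setIntegral_ge_of_const_le hAmeas hAfin.ne hIlb hIint.integrableOn)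
      _ ≤ ∫ u, I u ∂ν := by
          apply setIntegral_le_integral hIint
          filter_upwards [ae_restrict_mem measurableSet_Ioi] with u hu
          exact hInn u hu
  have : 0 < 2 * (IG * If - IF * Ig) := by
    rw [← hIsum]
    calc (0:ℝ) < δ * (ν B).toReal * (ν A).toReal := by positivity
      _ ≤ _ := hmain
  linarith

theorem stmt5 (μ : Measure ℝ) (S : Set ℝ) (hSopen : IsOpen S) (hSconn : S.OrdConnected)
    (hsupp : ∃ u₁ u₂ : ℝ, 0 < u₁ ∧ 0 < u₂ ∧ u₁ ≠ u₂ ∧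
      (∀ ε > (0 : ℝ), μ (Metric.ball u₁ ε ∩ Set.Ioi 0) ≠ 0) ∧
      (∀ ε > (0 : ℝ), μ (Metric.ball u₂ ε ∩ Set.Ioi 0) ≠ 0))
    (hint2 : ∀ s ∈ S, IntegrableOn (fun u => u ^ 2 * Real.exp (s * u)) (Set.Ioi 0) μ)
    (hpos : ∀ s ∈ S, 0 < ∫ u in Set.Ioi (0 : ℝ), u * Real.exp (s * u) ∂μ) :
    StrictMonoOn (fun s => (∫ u in Set.Ioi (0 : ℝ), u ^ 2 * Real.exp (s * u) ∂μ) /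
      (∫ u in Set.Ioi (0 : ℝ), u * Real.exp (s * u) ∂μ)) S ∧
    ∀ (c : NNReal) (u₀ : ℝ), 0 < c → 0 < u₀ → ∀ s : ℝ,
      (∫ u in Set.Ioi (0 : ℝ), u ^ 2 * Real.exp (s * u) ∂(c • Measure.dirac u₀)) /
      (∫ u in Set.Ioi (0 : ℝ), u * Real.exp (s * u) ∂(c • Measure.dirac u₀)) = u₀ := by
  constructor
  · intro s hs t ht hst
    obtain ⟨u₁, u₂, h1, h2, h12, hs1, hs2⟩ := hsupp
    have hfint : ∀ r ∈ S, IntegrableOn (fun u => u * Real.exp (r * u)) (Set.Ioi 0) μ := by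
      intro r hr
      by_contra h
      have := hpos r hr
      rw [MeasureTheory.integral_undef h] at this
      exact lt_irrefl _ this
    simp only
    rw [div_lt_div_iff₀ (hpos s hs) (hpos t ht)]
    rcases lt_or_gt_of_ne h12 with h | h
    · exact stmt5_aux μ s t hst u₂ u₁ h2 h1 h hs2 hs1
        (hint2 s hs) (hint2 t ht) (hfint s hs) (hfint t ht)
    · exact stmt5_aux μ s t hst u₁ u₂ h1 h2 h hs1 hs2
        (hint2 s hs) (hint2 t ht) (hfint s hs) (hfint t ht)
  · intro c u₀ hc hu s
    classical
    have hmem : u₀ ∈ Set.Ioi (0:ℝ) := hu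
    have hrfl : (c • Measure.dirac u₀ : Measure ℝ) = ((c:ENNReal) • Measure.dirac u₀) := rfl
    rw [hrfl, Measure.restrict_smul, integral_smul_measure, integral_smul_measure,
      show ((Measure.dirac u₀).restrict (Set.Ioi 0)) = Measure.dirac u₀ from by
        rw [MeasureTheory.restrict_dirac]; simp [hmem],
      integral_dirac, integral_dirac, smul_eq_mul, smul_eq_mul, mul_div_mul_left]
    · rw [pow_two, mul_assoc, mul_div_assoc, div_self (by positivity), mul_one]
    · simpa using hc.ne'
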